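/- In an arrangement table of n pairwise intersecting pseudolines with only simple crossings, if r < i < j and in row r line i appears before line j, then in row i line r appears before line j, and in row j line r appears before line i (one case of the consistency property). -/

import Mathlib

open Real

/-- Intersection point of the lines `x·cos a₁ + y·sin a₁ + C₁ = 0` and
`x·cos a₂ + y·sin a₂ + C₂ = 0` (for non-parallel lines). -/
noncomputable def interPt (a₁ C₁ a₂ C₂ : ℝ) : ℝ × ℝ :=
  ((C₂ * Real.sin a₁ - C₁ * Real.sin a₂) / Real.sin (a₂ - a₁),
   (C₁ * Real.cos a₂ - C₂ * Real.cos a₁) / Real.sin (a₂ - a₁))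

/-- Direction vector of the directed line with normal angle `a ∈ (−π, 0)`,
following the paper's convention (line 1 topmost, directed right to left, other
lines numbered clockwise). -/
noncomputable def dirVec (a : ℝ) : ℝ × ℝ := (Real.sin a, -Real.cos a)

/-- On the directed line `k`, the crossing with line `u` precedes the crossing
with line `w`; equivalently, `u` appears before `w` in row `k` of the table. -/
noncomputable def rowBefore {n : ℕ} (a C : Fin n → ℝ) (k u w : Fin n) : Prop :=
  (interPt (a k) (C k) (a u) (C u)).1 * (dirVec (a k)).1 +
    (interPt (a k) (C k) (a u) (C u)).2 * (dirVec (a k)).2 <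
  (interPt (a k) (C k) (a w) (C w)).1 * (dirVec (a k)).1 +
    (interPt (a k) (C k) (a w) (C w)).2 * (dirVec (a k)).2

/-- The parameter along line `k` of its crossing with line `u`. -/
lemma tval (ak Ck au Cu : ℝ) :
    (interPt ak Ck au Cu).1 * (dirVec ak).1 +
      (interPt ak Ck au Cu).2 * (dirVec ak).2
    = (Cu - Ck * Real.cos (au - ak)) / Real.sin (au - ak) := by
  unfold interPt dirVec
  simp only [div_mul_eq_mul_div, ← add_div]
  congr 1
  rw [Real.cos_sub]
  linear_combination Cu * (Real.sin_sq_add_cos_sq ak)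

theorem stmt_13 (n : ℕ) (a C : Fin n → ℝ)
    (hrange : ∀ k, -Real.pi < a k ∧ a k < 0)
    (hanti : StrictAnti a)
    (hgen : ∀ r i j : Fin n, r ≠ i → r ≠ j → i ≠ j →
      ¬∃ p : ℝ × ℝ,
        (p.1 * Real.cos (a r) + p.2 * Real.sin (a r) + C r = 0) ∧
        (p.1 * Real.cos (a i) + p.2 * Real.sin (a i) + C i = 0) ∧
        (p.1 * Real.cos (a j) + p.2 * Real.sin (a j) + C j = 0))
    (r i j : Fin n) (hri : r < i) (hij : i < j)
    (h : rowBefore a C r i j) :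
    rowBefore a C i r j ∧ rowBefore a C j r i := by
  unfold rowBefore at h ⊢
  rw [tval, tval] at h
  rw [tval, tval, tval, tval]
  -- angle differences
  set x := a r - a i with hxdef
  set y := a i - a j with hydef
  set z := a r - a j with hzdef
  have hxpos : 0 < x := sub_pos.mpr (hanti hri)
  have hypos : 0 < y := sub_pos.mpr (hanti hij)
  have hzxy : z = x + y := by rw [hxdef, hydef, hzdef]; ring
  have hzpos : 0 < z := by rw [hzxy]; linarith
  have hzlt : z < Real.pi := by
    have h1 := (hrange r).2
    have h2 := (hrange j).1
    rw [hzdef]; linarith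
  have hxlt : x < Real.pi := by rw [hzxy] at hzlt; linarith
  have hylt : y < Real.pi := by rw [hzxy] at hzlt; linarith
  have hsx : 0 < Real.sin x := Real.sin_pos_of_pos_of_lt_pi hxpos hxlt
  have hsy : 0 < Real.sin y := Real.sin_pos_of_pos_of_lt_pi hypos hylt
  have hsz : 0 < Real.sin z := Real.sin_pos_of_pos_of_lt_pi hzpos hzlt
  -- rewrite the negated differences appearing in h and the goals
  have hir : a i - a r = -x := by rw [hxdef]; ring
  have hjr : a j - a r = -z := by rw [hzdef]; ring
  have hji : a j - a i = -y := by rw [hydef]; ring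
  have hri' : a r - a i = x := rfl
  have hrj' : a r - a j = z := rfl
  have hij' : a i - a j = y := rfl
  rw [hir, hjr, Real.sin_neg, Real.cos_neg, Real.sin_neg, Real.cos_neg,
    div_neg, div_neg, neg_lt_neg_iff, div_lt_div_iff₀ hsz hsx] at h
  -- the key quantity
  have hsinz : Real.sin z = Real.sin x * Real.cos y + Real.cos x * Real.sin y := by
    rw [hzxy, Real.sin_add]
  have hsiny : Real.sin y = Real.sin z * Real.cos x - Real.cos z * Real.sin x := by
    have : y = z - x := by rw [hzxy]; ring
    rw [this, Real.sin_sub]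
  have hsinx : Real.sin x = Real.sin z * Real.cos y - Real.cos z * Real.sin y := by
    have : x = z - y := by rw [hzxy]; ring
    rw [this, Real.sin_sub]
  have key : C j * Real.sin x - C i * Real.sin z + C r * Real.sin y < 0 := by
    rw [hsiny]; nlinarith [h]
  have key2 := key
  rw [hsinz] at key2
  have key3 := key
  rw [hsinx] at key3
  constructor
  · -- row i : r before j
    rw [hji, Real.sin_neg, Real.cos_neg, div_neg, lt_neg, ← neg_div,
      div_lt_div_iff₀ hsy hsx]
    nlinarith [key2]
  · -- row j : r before i
    rw [div_lt_div_iff₀ hsz hsy]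
    nlinarith [key3]
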